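/- If Γ' is a finite cubic (3-regular) multigraph of girth g with a vertex-neighborhood labeling ρ, then in the triangle-replaced graph ∇(Γ') every cycle containing a non-triangle edge has length at least 2g. -/

import Mathlib

open SimpleGraph

/-- The triangle-replaced graph `∇(Γ')` of a cubic graph with respect to a
vertex-neighborhood labeling `ρ`: each vertex `u` is replaced by a triangle
`{(u,1),(u,2),(u,3)}`, and each edge `uw` of `Γ'` becomes the non-triangle edge
between `(u, ρ u w)` and `(w, ρ w u)`. -/
def nabla {V : Type*} (G : SimpleGraph V) (ρ : V → V → Fin 3) : SimpleGraph (V × Fin 3) :=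
  SimpleGraph.fromRel (fun x y =>
    x.1 = y.1 ∨ (G.Adj x.1 y.1 ∧ ρ x.1 y.1 = x.2 ∧ ρ y.1 x.1 = y.2))

section Aux

variable {V : Type*} {G : SimpleGraph V} {ρ : V → V → Fin 3}

lemma nabla_adj_iff {a b : V × Fin 3} :
    (nabla G ρ).Adj a b ↔ a ≠ b ∧
      (a.1 = b.1 ∨ (G.Adj a.1 b.1 ∧ ρ a.1 b.1 = a.2 ∧ ρ b.1 a.1 = b.2)) := by
  rw [nabla, fromRel_adj]
  constructor
  · rintro ⟨hne, (h | h) | (h | h)⟩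
    exacts [⟨hne, .inl h⟩, ⟨hne, .inr h⟩, ⟨hne, .inl h.symm⟩,
      ⟨hne, .inr ⟨h.1.symm, h.2.2, h.2.1⟩⟩]
  · rintro ⟨hne, h⟩; exact ⟨hne, .inl h⟩

lemma nt_spec {a b : V × Fin 3} (h : (nabla G ρ).Adj a b) (hne : a.1 ≠ b.1) :
    G.Adj a.1 b.1 ∧ a.2 = ρ a.1 b.1 ∧ b.2 = ρ b.1 a.1 := by
  obtain ⟨-, h | h⟩ := nabla_adj_iff.mp h
  · exact absurd h hne
  · exact ⟨h.1, h.2.1.symm, h.2.2.symm⟩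

lemma nt_eq_fst {a b : V × Fin 3} (h : (nabla G ρ).Adj a b) (hne : a.1 ≠ b.1) :
    a = (a.1, ρ a.1 b.1) := Prod.ext rfl (nt_spec h hne).2.1

end Aux

section Proj

variable {V : Type*}

/-- Project a walk in `nabla G ρ` to a walk in `G`, collapsing triangle edges. -/
def projWalk (G : SimpleGraph V) (ρ : V → V → Fin 3) [DecidableEq V] :
    ∀ {x y : V × Fin 3}, (nabla G ρ).Walk x y → G.Walk x.1 y.1
  | _, _, .nil => .nil
  | x, _, .cons (v := b) h p =>
    if hb : x.1 = b.1 then (projWalk G ρ p).copy hb.symm rfl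
    else .cons (nt_spec h hb).1 (projWalk G ρ p)

variable [DecidableEq V] {G : SimpleGraph V} {ρ : V → V → Fin 3}

lemma projWalk_cons {x b y : V × Fin 3} (h : (nabla G ρ).Adj x b) (p : (nabla G ρ).Walk b y) :
    projWalk G ρ (.cons h p) =
      if hb : x.1 = b.1 then (projWalk G ρ p).copy hb.symm rfl
      else .cons (nt_spec h hb).1 (projWalk G ρ p) := rfl

lemma mem_projWalk_edges {x y : V × Fin 3} (p : (nabla G ρ).Walk x y) {a b : V × Fin 3}
    (hm : s(a, b) ∈ p.edges) (hne : a.1 ≠ b.1) : s(a.1, b.1) ∈ (projWalk G ρ p).edges := by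
  induction p with
  | nil => simp at hm
  | @cons u b' y h q ih =>
    rw [Walk.edges_cons, List.mem_cons] at hm
    rw [projWalk_cons]
    rcases hm with hm | hm
    · have h2 : u.1 ≠ b'.1 ∧ s(a.1, b.1) = s(u.1, b'.1) := by
        rw [Sym2.eq_iff] at hm
        rcases hm with ⟨rfl, rfl⟩ | ⟨rfl, rfl⟩
        · exact ⟨hne, rfl⟩
        · exact ⟨hne.symm, Sym2.eq_swap⟩
      rw [dif_neg h2.1, Walk.edges_cons, h2.2]
      exact List.mem_cons_self
    · split
      · simpa using ih hm
      · exact List.mem_cons_of_mem _ (ih hm)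

lemma projWalk_edges_mem {x y : V × Fin 3} (p : (nabla G ρ).Walk x y) {u w : V}
    (hm : s(u, w) ∈ (projWalk G ρ p).edges) :
    s(((u, ρ u w) : V × Fin 3), ((w, ρ w u) : V × Fin 3)) ∈ p.edges := by
  induction p with
  | nil => simp [projWalk] at hm
  | @cons a b y h q ih =>
    rw [projWalk_cons] at hm
    rw [Walk.edges_cons, List.mem_cons]
    split at hm
    · rw [Walk.edges_copy] at hm
      exact .inr (ih hm)
    · rename_i hab
      rw [Walk.edges_cons, List.mem_cons] at hm
      rcases hm with hm | hm
      · left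
        obtain ⟨hadj, ha2, hb2⟩ := nt_spec h hab
        rw [Sym2.eq_iff] at hm
        rcases hm with ⟨rfl, rfl⟩ | ⟨rfl, rfl⟩
        · rw [← ha2, ← hb2]
        · rw [← ha2, ← hb2, Sym2.eq_swap]
      · exact .inr (ih hm)

lemma projWalk_isTrail_edges {x y : V × Fin 3} (p : (nabla G ρ).Walk x y)
    (hp : p.edges.Nodup) : (projWalk G ρ p).edges.Nodup := by
  induction p with
  | nil => simp [projWalk]
  | @cons a b y h q ih =>
    rw [Walk.edges_cons, List.nodup_cons] at hp
    rw [projWalk_cons]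
    split
    · rw [Walk.edges_copy]; exact ih hp.2
    · rename_i hab
      rw [Walk.edges_cons, List.nodup_cons]
      refine ⟨fun hmem => ?_, ih hp.2⟩
      have := projWalk_edges_mem q hmem
      obtain ⟨hadj, ha2, hb2⟩ := nt_spec h hab
      rw [← ha2, ← hb2] at this
      exact hp.1 this

lemma projWalk_length {x y : V × Fin 3} (p : (nabla G ρ).Walk x y) :
    (projWalk G ρ p).length = (p.darts.filter (fun d => d.fst.1 ≠ d.snd.1)).length := by
  induction p with
  | nil => simp [projWalk]
  | @cons a b y h q ih =>
    rw [projWalk_cons, Walk.darts_cons]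
    split
    · rename_i hab
      rw [Walk.length_copy, List.filter_cons_of_neg (by simpa using hab)]
      exact ih
    · rename_i hab
      rw [Walk.length_cons, List.filter_cons_of_pos (by simpa using hab), List.length_cons, ih]

lemma dropLast_support_nodup {W : Type*} {H : SimpleGraph W} {v : W} {c : H.Walk v v}
    (hc : c.IsCycle) : c.support.dropLast.Nodup := by
  have ht : c.support.tail.Nodup := hc.support_nodup
  have hlen : c.support.tail.length = c.length := by
    have := c.length_support
    simp [List.length_tail, this]
  have hnil : c.support.tail ≠ [] := by
    have h3 := hc.three_le_length
    intro h; rw [h] at hlen; simp at hlen; omega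
  have hlast : c.support.tail.getLast? = some v := by
    obtain ⟨y, t', ht'⟩ := List.exists_cons_of_ne_nil hnil
    have h0 : c.support.getLast? = some v := by
      rw [List.getLast?_eq_getLast (c.support_ne_nil), c.getLast_support]
    rw [c.support_eq_cons, ht', List.getLast?_cons_cons] at h0
    rw [ht']; exact h0
  have hsplit : c.support.tail.dropLast ++ [v] = c.support.tail :=
    List.dropLast_append_getLast? v hlast
  have hta : (c.support.tail.dropLast ++ [v]).Nodup := by rw [hsplit]; exact ht
  rw [List.nodup_append] at hta
  rw [c.support_eq_cons]
  obtain ⟨y, t', ht'⟩ := List.exists_cons_of_ne_nil hnil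
  rw [ht', List.dropLast_cons₂, List.nodup_cons, ← ht']
  constructor
  · intro hv
    exact hta.2.2 v hv v (List.mem_singleton_self v) rfl
  · exact hta.1

lemma matching_bound {x : V × Fin 3} (c : (nabla G ρ).Walk x x) (hc : c.IsCycle)
    (hρ : ∀ u v w, G.Adj u v → G.Adj u w → v ≠ w → ρ u v ≠ ρ u w) [DecidableEq (V × Fin 3)] :
    2 * (c.darts.filter (fun d => d.fst.1 ≠ d.snd.1)).length ≤ c.length := by
  set L := c.darts with hL
  set S := L.filter (fun d => d.fst.1 ≠ d.snd.1) with hS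
  have hSL : S.Sublist L := List.filter_sublist
  have hSnt : ∀ d ∈ S, d.fst.1 ≠ d.snd.1 := by
    intro d hd
    have := List.of_mem_filter hd
    simpa using this
  have hSmem : ∀ d ∈ S, d ∈ L := fun d hd => hSL.mem hd
  -- firsts of darts are nodup
  have hfstL : (L.map (·.fst)).Nodup := by
    rw [hL, Walk.map_fst_darts]
    exact dropLast_support_nodup hc
  have hsndL : (L.map (·.snd)).Nodup := by
    rw [hL, Walk.map_snd_darts]
    exact hc.support_nodup
  have hfstS : (S.map (·.fst)).Nodup := (hSL.map _).nodup hfstL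
  have hsndS : (S.map (·.snd)).Nodup := (hSL.map _).nodup hsndL
  -- key: no fst of a nontriangle dart equals a snd of a nontriangle dart
  have key : ∀ d ∈ S, ∀ d' ∈ S, d.fst ≠ d'.snd := by
    intro d hd d' hd' heq
    have hdnt := hSnt d hd
    have hdnt' := hSnt d' hd'
    obtain ⟨hadj1, ha1, hb1⟩ := nt_spec d.adj hdnt
    have hadj'' : (nabla G ρ).Adj d'.snd d'.fst := d'.adj.symm
    obtain ⟨hadj2, ha2, hb2⟩ := nt_spec hadj'' hdnt'.symm
    rw [heq] at hadj1 ha1 hb1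
    -- hadj1 : G.Adj d'.snd.1 d.snd.1, ha1 : d'.snd.2 = ρ d'.snd.1 d.snd.1
    have hfeq : d.snd.1 = d'.fst.1 := by
      by_contra hne
      exact hρ d'.snd.1 d.snd.1 d'.fst.1 hadj1 hadj2 hne (ha1 ▸ ha2)
    have hsnd : d.snd = d'.fst := by
      refine Prod.ext hfeq ?_
      rw [hb1, hb2, hfeq]
    -- so d and d' have the same edge
    have hedge : d.edge = d'.edge := by
      show s(d.fst, d.snd) = s(d'.fst, d'.snd)
      rw [heq, hsnd]
      exact Sym2.eq_swap
    have hedges : (L.map SimpleGraph.Dart.edge).Nodup := hc.isTrail.edges_nodup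
    have hdd : d = d' := List.inj_on_of_nodup_map hedges (hSmem d hd) (hSmem d' hd') hedge
    rw [hdd] at heq
    exact hdnt' (congrArg (fun z => z.1) heq)
  -- assemble the nodup list of 2N vertices
  have hdisj : (S.map (·.fst)).Disjoint (S.map (·.snd)) := by
    intro a hma hma'
    obtain ⟨d, hd, rfl⟩ := List.mem_map.mp hma
    obtain ⟨d', hd', heq⟩ := List.mem_map.mp hma'
    exact key d hd d' hd' heq.symm
  have hT : (S.map (·.fst) ++ S.map (·.snd)).Nodup := List.Nodup.append hfstS hsndS hdisj
  have hTsub : ∀ z ∈ S.map (·.fst) ++ S.map (·.snd), z ∈ c.support := by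
    intro z hz
    rcases List.mem_append.mp hz with hz | hz
    · obtain ⟨d, hd, rfl⟩ := List.mem_map.mp hz
      exact Walk.dart_fst_mem_support_of_mem_darts c (hSmem d hd)
    · obtain ⟨d, hd, rfl⟩ := List.mem_map.mp hz
      exact Walk.dart_snd_mem_support_of_mem_darts c (hSmem d hd)
  -- cardinality of the support
  have hsupcard : c.support.toFinset.card = c.length := by
    have hlen : c.support.tail.length = c.length := by
      have := c.length_support
      simp [List.length_tail, this]
    have hnil : c.support.tail ≠ [] := by
      have h3 := hc.three_le_length
      intro h; rw [h] at hlen; simp at hlen; omega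
    have hlast : c.support.tail.getLast? = some x := by
      obtain ⟨y, t', ht'⟩ := List.exists_cons_of_ne_nil hnil
      have h0 : c.support.getLast? = some x := by
        rw [List.getLast?_eq_getLast (c.support_ne_nil), c.getLast_support]
      rw [c.support_eq_cons, ht', List.getLast?_cons_cons] at h0
      rw [ht']; exact h0
    have hxmem : x ∈ c.support.tail := by
      have hsplit : c.support.tail.dropLast ++ [x] = c.support.tail :=
        List.dropLast_append_getLast? x hlast
      rw [← hsplit]
      exact List.mem_append_right _ (List.mem_singleton_self x)
    rw [c.support_eq_cons, List.toFinset_cons,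
      Finset.insert_eq_self.mpr (List.mem_toFinset.mpr hxmem),
      List.toFinset_card_of_nodup hc.support_nodup, hlen]
  have hTlen : (S.map (·.fst) ++ S.map (·.snd)).length = 2 * S.length := by
    simp [two_mul]
  calc 2 * S.length = (S.map (·.fst) ++ S.map (·.snd)).length := hTlen.symm
    _ = (S.map (·.fst) ++ S.map (·.snd)).toFinset.card := (List.toFinset_card_of_nodup hT).symm
    _ ≤ c.support.toFinset.card := Finset.card_le_card (fun z hz =>
        List.mem_toFinset.mpr (hTsub z (List.mem_toFinset.mp hz)))
    _ = c.length := hsupcard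

lemma exists_cycle_of_closed_trail {W : Type*} [DecidableEq W] {H : SimpleGraph W} {v : W} (w : H.Walk v v)
    (ht : w.IsTrail) (hn : ¬w.Nil) :
    ∃ (u : W) (q : H.Walk u u), q.IsCycle ∧ q.length ≤ w.length := by
  rw [Walk.not_nil_iff] at hn
  obtain ⟨v', h, p, rfl⟩ := hn
  rw [Walk.isTrail_cons] at ht
  refine ⟨v, Walk.cons h p.bypass, ⟨⟨⟨?_⟩, by simp⟩, ?_⟩, ?_⟩
  · rw [Walk.edges_cons, List.nodup_cons]
    exact ⟨fun hm => ht.2 (p.edges_bypass_subset hm), (p.bypass_isPath.isTrail).edges_nodup⟩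
  · simpa using p.bypass_isPath.support_nodup
  · simpa using Nat.succ_le_succ p.length_bypass_le

end Proj

/-- In the triangle-replaced graph of a cubic graph of girth `g`, every cycle containing a
non-triangle edge has length at least `2g`. -/
theorem nabla_cycle_through_nontriangle_edge_long {V : Type*} [Fintype V]
    (G : SimpleGraph V) [DecidableRel G.Adj] (g : ℕ)
    (hcubic : G.IsRegularOfDegree 3) (hgirth : G.girth = g)
    (ρ : V → V → Fin 3)
    (hρ : ∀ u v w, G.Adj u v → G.Adj u w → v ≠ w → ρ u v ≠ ρ u w)
    (x : V × Fin 3) (c : (nabla G ρ).Walk x x) (hc : c.IsCycle)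
    (he : ∃ e ∈ c.edges, ∃ (u w : V) (i j : Fin 3), u ≠ w ∧ e = s((u, i), (w, j))) :
    2 * g ≤ c.length := by
  classical
  obtain ⟨e, hec, u, w, i, j, huw, rfl⟩ := he
  have h1 : s(u, w) ∈ (projWalk G ρ c).edges :=
    mem_projWalk_edges c hec (by simpa using huw)
  have hnotnil : ¬(projWalk G ρ c).Nil := by
    rw [Walk.not_nil_iff_lt_length, ← Walk.length_edges]
    exact List.length_pos_of_mem h1
  have htrail : (projWalk G ρ c).IsTrail := ⟨projWalk_isTrail_edges c hc.isTrail.edges_nodup⟩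
  obtain ⟨u0, q, hq, hql⟩ := exists_cycle_of_closed_trail _ htrail hnotnil
  have hegirth : G.egirth ≤ (q.length : ℕ∞) := by
    show (⨅ a, ⨅ w : G.Walk a a, ⨅ _ : w.IsCycle, (w.length : ℕ∞)) ≤ _
    exact iInf₂_le_of_le u0 q (iInf_le _ hq)
  have hg : g ≤ q.length := by
    rw [← hgirth]
    have := ENat.toNat_le_toNat hegirth (by simp)
    simpa [girth] using this
  have h2 : 2 * (projWalk G ρ c).length ≤ c.length := by
    rw [projWalk_length]
    exact matching_bound c hc hρ
  calc 2 * g ≤ 2 * q.length := by omega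
    _ ≤ 2 * (projWalk G ρ c).length := by omega
    _ ≤ c.length := h2
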